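/- The map G → ℤ² × (ℤ/2ℤ)² sending (a,b,c,d) to (a, b, c mod 2, d mod 2) is a surjective group homomorphism whose kernel is exactly the commutator subgroup [G,G]. -/

import Mathlib

/-- The underlying set of the group `G` is `ℤ⁴`. -/
def G : Type := ℤ × ℤ × ℤ × ℤ

namespace G

/-- Build an element of `G` from four integers. -/
def mk (a b c d : ℤ) : G := (a, b, c, d)

/-- The twisted multiplication
`(a,b,c,d)·(a',b',c',d') = (a+a', b+b', c+(−1)^a·c', d+(−1)^a·d')`. -/
def mul' (x y : G) : G :=
  mk (x.1 + y.1) (x.2.1 + y.2.1)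
    (x.2.2.1 + (x.1.negOnePow : ℤ) * y.2.2.1)
    (x.2.2.2 + (x.1.negOnePow : ℤ) * y.2.2.2)

/-- The inverse `(a,b,c,d)⁻¹ = (−a, −b, −(−1)^a·c, −(−1)^a·d)`. -/
def inv' (x : G) : G :=
  mk (-x.1) (-x.2.1) (-((x.1.negOnePow : ℤ) * x.2.2.1)) (-((x.1.negOnePow : ℤ) * x.2.2.2))

instance instGroup : Group G where
  mul := mul'
  one := mk 0 0 0 0
  inv := inv'
  mul_assoc x y z := by
    show mul' (mul' x y) z = mul' x (mul' y z)
    obtain ⟨a, b, c, d⟩ := x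
    obtain ⟨a', b', c', d'⟩ := y
    obtain ⟨a'', b'', c'', d''⟩ := z
    simp only [mul', mk, Int.negOnePow_add, Units.val_mul]
    exact Prod.ext (by ring) (Prod.ext (by ring) (Prod.ext (by ring) (by ring)))
  one_mul x := by
    show mul' (mk 0 0 0 0) x = x
    obtain ⟨a, b, c, d⟩ := x
    simp [mul', mk] <;> rfl
  mul_one x := by
    show mul' x (mk 0 0 0 0) = x
    obtain ⟨a, b, c, d⟩ := x
    simp [mul', mk] <;> rfl
  inv_mul_cancel x := by
    show mul' (inv' x) x = mk 0 0 0 0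
    obtain ⟨a, b, c, d⟩ := x
    simp only [mul', inv', mk, Int.negOnePow_neg]
    exact Prod.ext (by ring) (Prod.ext (by ring) (Prod.ext (by ring) (by ring)))

def g₀ : G := mk 1 0 0 0
def g₁ : G := mk 0 1 0 0
def g₂ : G := mk 0 0 1 0
def g₃ : G := mk 0 0 0 1

end G

open scoped commutatorElement

namespace G

lemma negOnePow_cast_zmod2 (a : ℤ) : (((a.negOnePow : ℤ)) : ZMod 2) = 1 := by
  rcases Int.even_or_odd a with h | h
  · rw [Int.negOnePow_even a h]; simp
  · rw [Int.negOnePow_odd a h]; decide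

lemma mul_def (x y : G) : x * y = mul' x y := rfl

lemma inv_def (x : G) : x⁻¹ = inv' x := rfl

lemma one_def : (1 : G) = mk 0 0 0 0 := rfl

lemma mk_mul (a b c d a' b' c' d' : ℤ) :
    mk a b c d * mk a' b' c' d' =
      mk (a + a') (b + b') (c + (a.negOnePow : ℤ) * c') (d + (a.negOnePow : ℤ) * d') := rfl

lemma mk_pow (u v : ℤ) : ∀ n : ℕ, (mk 0 0 u v) ^ n = mk 0 0 (n * u) (n * v)
  | 0 => by rw [pow_zero, one_def]; norm_num
  | n + 1 => by
      rw [pow_succ, mk_pow u v n, mk_mul]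
      simp only [Int.negOnePow_zero, Units.val_one, mk]
      push_cast
      exact Prod.ext (by ring) (Prod.ext (by ring) (Prod.ext (by ring) (by ring)))

lemma mk_zpow (u v : ℤ) : ∀ n : ℤ, (mk 0 0 u v) ^ n = mk 0 0 (n * u) (n * v)
  | Int.ofNat n => by
      rw [Int.ofNat_eq_coe, zpow_natCast, mk_pow]
  | Int.negSucc n => by
      rw [zpow_negSucc, mk_pow, inv_def]
      simp only [inv', mk, Int.negOnePow_zero, Units.val_one, one_mul, Int.negSucc_eq]
      push_cast
      exact Prod.ext (by ring) (Prod.ext (by ring) (Prod.ext (by ring) (by ring)))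

lemma comm_c : ⁅g₂, g₀⁆ = mk 0 0 2 0 := by
  show g₂ * g₀ * g₂⁻¹ * g₀⁻¹ = _
  simp only [mul_def, inv_def]
  simp only [g₀, g₂, mul', inv', mk]
  norm_num
  rfl

lemma comm_d : ⁅g₃, g₀⁆ = mk 0 0 0 2 := by
  show g₃ * g₀ * g₃⁻¹ * g₀⁻¹ = _
  simp only [mul_def, inv_def]
  simp only [g₀, g₃, mul', inv', mk]
  norm_num
  rfl

end G

/-- The map `G → ℤ² × (ℤ/2ℤ)²`, `(a,b,c,d) ↦ (a, b, c mod 2, d mod 2)`, is a surjective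
group homomorphism whose kernel is exactly the commutator subgroup `[G,G]`. -/
theorem G_abelianization_hom :
    ∃ f : G →* Multiplicative (ℤ × ℤ × ZMod 2 × ZMod 2),
      (∀ a b c d : ℤ,
        f (G.mk a b c d) = Multiplicative.ofAdd (a, b, (c : ZMod 2), (d : ZMod 2))) ∧
      Function.Surjective f ∧
      f.ker = commutator G := by
  refine ⟨{ toFun := fun x => Multiplicative.ofAdd (x.1, x.2.1, ((x.2.2.1 : ℤ) : ZMod 2), ((x.2.2.2 : ℤ) : ZMod 2)), map_one' := rfl, map_mul' := ?_ }, fun a b c d => rfl, ?_, ?_⟩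
  · intro x y
    rw [G.mul_def]
    obtain ⟨a, b, c, d⟩ := x
    obtain ⟨a', b', c', d'⟩ := y
    show Multiplicative.ofAdd _ = Multiplicative.ofAdd _ * Multiplicative.ofAdd _
    rw [← ofAdd_add]
    congr 1
    simp only [G.mul', G.mk, Prod.mk_add_mk]
    refine Prod.ext rfl (Prod.ext rfl (Prod.ext ?_ ?_)) <;>
      push_cast [G.negOnePow_cast_zmod2] <;> ring
  · intro z
    obtain ⟨c, hc⟩ := ZMod.intCast_surjective (Multiplicative.toAdd z).2.2.1
    obtain ⟨d, hd⟩ := ZMod.intCast_surjective (Multiplicative.toAdd z).2.2.2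
    refine ⟨G.mk (Multiplicative.toAdd z).1 (Multiplicative.toAdd z).2.1 c d, ?_⟩
    have h : ((Multiplicative.toAdd z).1, (Multiplicative.toAdd z).2.1,
        ((c : ℤ) : ZMod 2), ((d : ℤ) : ZMod 2)) = Multiplicative.toAdd z := by
      rw [hc, hd]
    exact (congrArg Multiplicative.ofAdd h).trans (ofAdd_toAdd z)
  · ext x
    constructor
    · intro hx
      obtain ⟨a, b, c, d⟩ := x
      replace hx := MonoidHom.mem_ker.mp hx
      have h : ((a, b, (c : ZMod 2), (d : ZMod 2)) : ℤ × ℤ × ZMod 2 × ZMod 2) = (0, 0, 0, 0) :=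
        congrArg Multiplicative.toAdd hx
      simp only [Prod.mk.injEq] at h
      obtain ⟨ha, hb, hc, hd⟩ := h
      obtain ⟨m, hm⟩ := (ZMod.intCast_zmod_eq_zero_iff_dvd c 2).mp hc
      obtain ⟨n, hn⟩ := (ZMod.intCast_zmod_eq_zero_iff_dvd d 2).mp hd
      have hx' : ((a, b, c, d) : G) = ⁅G.g₂, G.g₀⁆ ^ m * ⁅G.g₃, G.g₀⁆ ^ n := by
        rw [G.comm_c, G.comm_d, G.mk_zpow, G.mk_zpow, G.mk_mul]
        show G.mk a b c d = _
        subst ha hb hm hn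
        simp only [Int.negOnePow_zero, Units.val_one, G.mk]
        push_cast
        exact Prod.ext (by ring) (Prod.ext (by ring) (Prod.ext (by ring) (by ring)))
      rw [commutator_def, hx']
      exact Subgroup.mul_mem _
        (Subgroup.zpow_mem _ (Subgroup.commutator_mem_commutator (Subgroup.mem_top _)
          (Subgroup.mem_top _)) m)
        (Subgroup.zpow_mem _ (Subgroup.commutator_mem_commutator (Subgroup.mem_top _)
          (Subgroup.mem_top _)) n)
    · intro hx
      exact Abelianization.commutator_subset_ker _ hx
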